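/- For every natural number n ≥ 1 there exists a metric d_n on the interval J_n = [n − 1, n] that induces the standard topology on J_n and is such that every finite subset Z of the cube Iⁿ = [0, n]ⁿ (with the sup metric D(x̄, ȳ) = max_{1 ≤ i ≤ n} |x_i − y_i|) which is (1/n)-dispersed admits an isometric embedding of (Z, D) into (J_n, d_n). -/

import Mathlib

open Real Set

noncomputable section

/-- The 2-periodic "tent-step" function: distance-to-nearest-even-integer, rescaled
through a clamp: 0 on [0,1/3]+2ℤ (and its reflections), 1 on [2/3,1]+2ℤ etc. -/
noncomputable def upp (t : ℝ) : ℝ :=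
  min 1 (max 0 (3 * (Real.arccos (Real.cos (Real.pi * t)) / Real.pi) - 1))

lemma upp_continuous : Continuous upp := by
  unfold upp
  have h1 : Continuous fun t : ℝ => Real.arccos (Real.cos (Real.pi * t)) / Real.pi :=
    (Real.continuous_arccos.comp (Real.continuous_cos.comp
      (continuous_const.mul continuous_id))).div_const _
  exact continuous_const.min (continuous_const.max
    ((continuous_const.mul h1).sub continuous_const))

lemma upp_nonneg (t : ℝ) : 0 ≤ upp t := le_min one_pos.le (le_max_left _ _)

lemma upp_le_one (t : ℝ) : upp t ≤ 1 := min_le_left _ _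

lemma upp_add_two_int (t : ℝ) (k : ℤ) : upp (t + 2 * k) = upp t := by
  unfold upp
  have h : Real.pi * (t + 2 * k) = Real.pi * t + (k : ℝ) * (2 * Real.pi) := by ring
  rw [h, Real.cos_add_int_mul_two_pi]

lemma upp_of_mem_unit {t : ℝ} (h0 : 0 ≤ t) (h1 : t ≤ 1) :
    upp t = min 1 (max 0 (3 * t - 1)) := by
  unfold upp
  have hp : (0:ℝ) ≤ Real.pi * t := mul_nonneg Real.pi_pos.le h0
  have hp' : Real.pi * t ≤ Real.pi := by
    nlinarith [Real.pi_pos]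
  rw [Real.arccos_cos hp hp']
  rw [mul_comm Real.pi t, mul_div_assoc, div_self Real.pi_ne_zero, mul_one]

lemma upp_eq_zero {t : ℝ} (h0 : 0 ≤ t) (h1 : t ≤ 1/3) : upp t = 0 := by
  rw [upp_of_mem_unit h0 (by linarith)]
  rw [max_eq_left (by linarith), min_eq_right zero_le_one]

lemma upp_eq_one {t : ℝ} (h0 : 2/3 ≤ t) (h1 : t ≤ 1) : upp t = 1 := by
  rw [upp_of_mem_unit (by linarith) h1]
  rw [min_eq_left]
  exact le_max_of_le_right (by linarith)

end

noncomputable section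

/-- Binary expansion of a real number in `[0,1]`. -/
lemma exists_binary {y : ℝ} (h0 : 0 ≤ y) (h1 : y ≤ 1) :
    ∃ a : ℕ → ℝ, (∀ k, a k = 0 ∨ a k = 1) ∧ HasSum (fun k => a k / 2 ^ (k + 1)) y := by
  classical
  have H : ∃ r : ℕ → ℝ, r 0 = y ∧ ∀ k, r (k+1) = 2 * r k - (if 1/2 ≤ r k then 1 else 0) :=
    ⟨fun k => Nat.rec (motive := fun _ => ℝ) y
      (fun _ rk => 2 * rk - (if 1/2 ≤ rk then 1 else 0)) k, rfl, fun k => rfl⟩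
  obtain ⟨r, hr0, hrS⟩ := H
  set a : ℕ → ℝ := fun k => if 1/2 ≤ r k then 1 else 0 with ha
  have haa : ∀ k, a k = (if 1/2 ≤ r k then 1 else 0) := fun _ => rfl
  have ha01 : ∀ k, a k = 0 ∨ a k = 1 := fun k => by
    by_cases h : 1/2 ≤ r k
    · exact Or.inr (by rw [haa, if_pos h])
    · exact Or.inl (by rw [haa, if_neg h])
  have hbound : ∀ k, 0 ≤ r k ∧ r k ≤ 1 := by
    intro k; induction k with
    | zero => rw [hr0]; exact ⟨h0, h1⟩
    | succ k ih =>
      rw [hrS k]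
      split_ifs with hc <;> constructor <;> linarith [ih.1, ih.2]
  have hpartial : ∀ m, ∑ k ∈ Finset.range m, a k / 2 ^ (k + 1) = y - r m / 2 ^ m := by
    intro m; induction m with
    | zero => simp [hr0]
    | succ m ih =>
      rw [Finset.sum_range_succ, ih, hrS m, ← haa m]
      have h2 : (0:ℝ) < 2 ^ m := by positivity
      field_simp
      ring
  have hsummable : Summable (fun k => a k / 2 ^ (k + 1)) := by
    apply Summable.of_nonneg_of_le
      (fun k => div_nonneg (by rcases ha01 k with h | h <;> rw [h] <;> norm_num)
        (by positivity))
      (fun k => ?_) (summable_geometric_two.mul_left (1/2))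
    have h2 : (1/2 : ℝ) * (1/2) ^ k = 1 / 2 ^ (k+1) := by
      rw [one_div, inv_pow, pow_succ]; ring
    rw [h2]
    gcongr
    rcases ha01 k with h | h <;> rw [h] <;> norm_num
  have h2 : Filter.Tendsto (fun m : ℕ => r m / 2 ^ m) Filter.atTop (nhds 0) := by
    apply squeeze_zero (fun m => div_nonneg (hbound m).1 (by positivity)) (fun m => ?_)
      (tendsto_pow_atTop_nhds_zero_of_lt_one (by norm_num) (by norm_num : (1:ℝ)/2 < 1))
    rw [one_div, inv_pow, ← one_div]
    gcongr
    exact (hbound m).2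
  have hlim : Filter.Tendsto (fun m => ∑ k ∈ Finset.range m, a k / 2 ^ (k + 1))
      Filter.atTop (nhds y) := by
    have h3 := tendsto_const_nhds (x := y) (f := Filter.atTop (α := ℕ)) |>.sub h2
    rw [sub_zero] at h3
    refine h3.congr fun m => (hpartial m).symm
  have htsum : (∑' k, a k / 2 ^ (k + 1)) = y :=
    tendsto_nhds_unique hsummable.hasSum.tendsto_sum_nat hlim
  exact ⟨a, ha01, htsum ▸ hsummable.hasSum⟩

end

noncomputable section

open Filter

/-- The rebased tail of the ternary series. -/
noncomputable def tailS (A : ℕ → ℝ) (m : ℕ) : ℝ := ∑' l : ℕ, 2 * A (m + l) / 3 ^ (l + 1)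

variable {A : ℕ → ℝ}

lemma A_nonneg (hA : ∀ j, A j = 0 ∨ A j = 1) (j : ℕ) : 0 ≤ A j := by
  rcases hA j with h | h <;> rw [h] <;> norm_num
lemma A_le_one (hA : ∀ j, A j = 0 ∨ A j = 1) (j : ℕ) : A j ≤ 1 := by
  rcases hA j with h | h <;> rw [h] <;> norm_num

lemma geom3 : Summable (fun l : ℕ => 2 / (3:ℝ) ^ (l + 1)) ∧ (∑' l : ℕ, 2 / (3:ℝ) ^ (l + 1)) = 1 := by
  have hs : Summable (fun l : ℕ => (2/3 : ℝ) * (1/3) ^ l) :=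
    (summable_geometric_of_lt_one (by norm_num) (by norm_num)).mul_left _
  have hfun : (fun l : ℕ => 2 / (3:ℝ) ^ (l + 1)) = fun l : ℕ => (2/3 : ℝ) * (1/3) ^ l := by
    funext l
    rw [one_div, inv_pow, pow_succ]
    ring
  constructor
  · rw [hfun]; exact hs
  · rw [hfun, tsum_mul_left, tsum_geometric_of_lt_one (by norm_num) (by norm_num)]
    norm_num

lemma tailS_summable (hA : ∀ j, A j = 0 ∨ A j = 1) (m : ℕ) : Summable (fun l : ℕ => 2 * A (m + l) / 3 ^ (l + 1)) := by
  apply Summable.of_nonneg_of_le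
    (fun l => div_nonneg (by linarith [A_nonneg hA (m + l)]) (by positivity))
    (fun l => ?_) geom3.1
  gcongr
  linarith [A_le_one hA (m + l)]

lemma tailS_nonneg (hA : ∀ j, A j = 0 ∨ A j = 1) (m : ℕ) : 0 ≤ tailS A m :=
  tsum_nonneg fun l => div_nonneg (by linarith [A_nonneg hA (m + l)]) (by positivity)

lemma tailS_le_one (hA : ∀ j, A j = 0 ∨ A j = 1) (m : ℕ) : tailS A m ≤ 1 := by
  rw [← geom3.2]
  apply Summable.tsum_le_tsum (fun l => ?_) (tailS_summable hA m) geom3.1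
  gcongr
  linarith [A_le_one hA (m + l)]

lemma tailS_rec (hA : ∀ j, A j = 0 ∨ A j = 1) (m : ℕ) : tailS A m = 2 * A m / 3 + tailS A (m + 1) / 3 := by
  have h := Summable.tsum_eq_zero_add (tailS_summable hA m)
  rw [tailS, h]
  have h1 : (fun l : ℕ => 2 * A (m + (l + 1)) / 3 ^ (l + 1 + 1))
      = fun l : ℕ => (2 * A (m + 1 + l) / 3 ^ (l + 1)) / 3 := by
    funext l
    have : m + (l + 1) = m + 1 + l := by omega
    rw [this, pow_succ]
    ring
  rw [h1, tsum_div_const]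
  norm_num [tailS]

lemma pow_mul_tailS (hA : ∀ j, A j = 0 ∨ A j = 1) (m : ℕ) :
    ∃ K : ℕ, 3 ^ m * tailS A 0 = 2 * K + tailS A m := by
  induction m with
  | zero => exact ⟨0, by norm_num⟩
  | succ m ih =>
    obtain ⟨K, hK⟩ := ih
    have h3 : (3:ℝ) ^ (m+1) * tailS A 0 = 3 * (3 ^ m * tailS A 0) := by ring
    rw [h3, hK, tailS_rec hA m]
    rcases hA m with h | h
    · exact ⟨3 * K, by rw [h]; push_cast; ring⟩
    · exact ⟨3 * K + 1, by rw [h]; push_cast; ring⟩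

lemma upp_pow_mul_tailS (hA : ∀ j, A j = 0 ∨ A j = 1) (m : ℕ) :
    upp (3 ^ m * tailS A 0) = A m := by
  obtain ⟨K, hK⟩ := pow_mul_tailS hA m
  have h1 : (3:ℝ) ^ m * tailS A 0 = tailS A m + 2 * (K : ℤ) := by
    rw [hK]; push_cast; ring
  rw [h1, upp_add_two_int]
  have hrec := tailS_rec hA m
  have h2 := tailS_nonneg hA (m + 1)
  have h3 := tailS_le_one hA (m + 1)
  rcases hA m with h | h <;> rw [h] <;> rw [h] at hrec
  · exact upp_eq_zero (by rw [hrec]; linarith) (by rw [hrec]; linarith)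
  · exact upp_eq_one (by rw [hrec]; linarith) (by rw [hrec]; linarith)

end

noncomputable section

open Filter Set

/-- The Schoenberg-type space-filling curve component. -/
noncomputable def curve (n : ℕ) (t : ℝ) (i : Fin n) : ℝ :=
  ∑' k : ℕ, upp (3 ^ (k * n + i.1) * t) / 2 ^ (k + 1)

lemma curve_continuous (n : ℕ) (i : Fin n) : Continuous fun t => curve n t i := by
  apply continuous_tsum
    (f := fun (k : ℕ) (t : ℝ) => upp (3 ^ (k * n + i.1) * t) / 2 ^ (k + 1))
    (u := fun k : ℕ => 1 / (2:ℝ) ^ (k + 1))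
  · intro k
    exact (upp_continuous.comp (continuous_const.mul continuous_id)).div_const _
  · have hfun : (fun k : ℕ => 1 / (2:ℝ) ^ (k + 1)) = fun k : ℕ => (1/2 : ℝ) * (1/2) ^ k := by
      funext k; rw [pow_succ]; field_simp; rw [← mul_pow]; norm_num
    rw [hfun]
    exact summable_geometric_two.mul_left _
  · intro k t
    rw [Real.norm_eq_abs, abs_div, abs_of_nonneg (upp_nonneg _), abs_of_nonneg (by positivity)]
    gcongr
    exact upp_le_one _

lemma curve_surj (n : ℕ) (hn : 1 ≤ n) (y : Fin n → ℝ) (hy : ∀ i, y i ∈ Set.Icc (0:ℝ) 1) :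
    ∃ t ∈ Set.Icc (0:ℝ) 1, ∀ i, curve n t i = y i := by
  choose a ha01 hsum using fun i => exists_binary (hy i).1 (hy i).2
  have hnpos : 0 < n := hn
  set A : ℕ → ℝ := fun m => a ⟨m % n, Nat.mod_lt m hnpos⟩ (m / n) with hAdef
  have hA : ∀ j, A j = 0 ∨ A j = 1 := fun j => ha01 _ _
  refine ⟨tailS A 0, ⟨tailS_nonneg hA 0, tailS_le_one hA 0⟩, fun i => ?_⟩
  have hidx : ∀ k : ℕ, A (k * n + i.1) = a i k := by
    intro k
    have h1 : (k * n + i.1) % n = i.1 := by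
      rw [add_comm, Nat.add_mul_mod_self_right, Nat.mod_eq_of_lt i.isLt]
    have h2 : (k * n + i.1) / n = k := by
      rw [add_comm, Nat.add_mul_div_right _ _ hnpos, Nat.div_eq_of_lt i.isLt, zero_add]
    show a ⟨(k * n + i.1) % n, _⟩ ((k * n + i.1) / n) = a i k
    rw [h2]
    congr 1
    exact Fin.ext h1
  calc curve n (tailS A 0) i
      = ∑' k : ℕ, a i k / 2 ^ (k + 1) := by
        apply tsum_congr; intro k
        rw [upp_pow_mul_tailS hA (k * n + i.1), hidx k]
    _ = y i := (hsum i).tsum_eq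

/-- The scaled curve on `[n-1, n]`. -/
noncomputable def Phi (n : ℕ) (s : ℝ) : Fin n → ℝ :=
  fun i => n * curve n (s - ((n:ℝ) - 1)) i

lemma Phi_continuous (n : ℕ) : Continuous (Phi n) := by
  apply continuous_pi
  intro i
  exact continuous_const.mul ((curve_continuous n i).comp (continuous_id.sub continuous_const))

lemma Phi_surj (n : ℕ) (hn : 1 ≤ n) (z : Fin n → ℝ) (hz : ∀ i, z i ∈ Set.Icc (0:ℝ) n) :
    ∃ s ∈ Set.Icc ((n:ℝ) - 1) (n:ℝ), Phi n s = z := by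
  have hn0 : (0:ℝ) < n := by exact_mod_cast hn
  obtain ⟨t, ht, hti⟩ := curve_surj n hn (fun i => z i / n) (fun i =>
    ⟨div_nonneg (hz i).1 hn0.le, by rw [div_le_one hn0]; exact (hz i).2⟩)
  refine ⟨t + ((n:ℝ) - 1), ⟨by linarith [ht.1], by linarith [ht.2]⟩, ?_⟩
  funext i
  show (n:ℝ) * curve n (t + ((n:ℝ) - 1) - ((n:ℝ) - 1)) i = z i
  rw [add_sub_cancel_right, hti i]
  field_simp

/-- sup distance equals Pi distance. -/
lemma pi_sup_dist (n : ℕ) (hn : 1 ≤ n) (x y : Fin n → ℝ) :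
    (⨆ i, |x i - y i|) = dist x y := by
  have : Nonempty (Fin n) := ⟨⟨0, hn⟩⟩
  have hbdd : BddAbove (Set.range fun i => |x i - y i|) := (Set.finite_range _).bddAbove
  have hnn : (0:ℝ) ≤ ⨆ i, |x i - y i| :=
    le_trans (abs_nonneg _) (le_ciSup hbdd ⟨0, hn⟩)
  apply le_antisymm
  · refine ciSup_le fun i => ?_
    rw [← Real.dist_eq]
    exact dist_le_pi_dist x y i
  · refine (dist_pi_le_iff hnn).2 fun i => ?_
    rw [Real.dist_eq]
    exact le_ciSup hbdd i

lemma min_tri {a b c d : ℝ} (h : a ≤ b + c) (hd : 0 ≤ d) (hb : 0 ≤ b) (hc : 0 ≤ c) :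
    min a d ≤ min b d + min c d := by
  rcases le_total b d with hb' | hb'
  · rcases le_total c d with hc' | hc'
    · rw [min_eq_left hb', min_eq_left hc']
      exact le_trans (min_le_left _ _) h
    · rw [min_eq_right hc']
      exact le_trans (min_le_right _ _) (le_add_of_nonneg_left (le_min hb hd))
  · rw [min_eq_right hb']
    exact le_trans (min_le_right _ _) (le_add_of_nonneg_right (le_min hc hd))

/-- The universal distance on `[n-1, n]`. -/
noncomputable def dd (n : ℕ) (x y : Set.Icc ((n:ℝ) - 1) (n:ℝ)) : ℝ :=
  max (dist (Phi n x.1) (Phi n y.1)) (min |x.1 - y.1| (1 / n))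

lemma dd_self (n : ℕ) (x : Set.Icc ((n:ℝ) - 1) (n:ℝ)) : dd n x x = 0 := by
  have h1 : (0:ℝ) ≤ 1 / n := by positivity
  simp [dd, min_eq_left h1]

lemma dd_comm (n : ℕ) (x y : Set.Icc ((n:ℝ) - 1) (n:ℝ)) : dd n x y = dd n y x := by
  rw [dd, dd, dist_comm, abs_sub_comm]

lemma dd_triangle (n : ℕ) (x y z : Set.Icc ((n:ℝ) - 1) (n:ℝ)) :
    dd n x z ≤ dd n x y + dd n y z := by
  apply max_le
  · exact (dist_triangle (Phi n x.1) (Phi n y.1) (Phi n z.1)).trans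
      (add_le_add (le_max_left _ _) (le_max_left _ _))
  · refine le_trans (min_tri (abs_sub_le x.1 y.1 z.1) (by positivity)
      (abs_nonneg _) (abs_nonneg _)) ?_
    exact add_le_add (le_max_right _ _) (le_max_right _ _)

lemma dd_eq_zero (n : ℕ) (hn : 1 ≤ n) (x y : Set.Icc ((n:ℝ) - 1) (n:ℝ))
    (h : dd n x y = 0) : x = y := by
  have h2 : min |x.1 - y.1| (1 / n) ≤ 0 := h ▸ le_max_right _ _
  have hpos : (0:ℝ) < 1 / n := by
    have : (0:ℝ) < n := by exact_mod_cast hn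
    positivity
  have h3 : |x.1 - y.1| ≤ 0 := by
    rcases min_cases |x.1 - y.1| (1 / n) with ⟨he, _⟩ | ⟨he, _⟩
    · linarith [he ▸ h2]
    · exfalso; rw [he] at h2; linarith
  have h4 : x.1 - y.1 = 0 := abs_eq_zero.1 (le_antisymm h3 (abs_nonneg _))
  exact Subtype.ext (by linarith)

end

/-- For every `n ≥ 1` there is a metric on `Jₙ = [n - 1, n]` inducing the standard topology
such that every finite `(1/n)`-dispersed subset `Z` of the cube `Iⁿ = [0, n]ⁿ` (with the sup
metric `D(x̄, ȳ) = max_i |xᵢ - yᵢ|`) embeds isometrically into `Jₙ` with this metric. -/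
theorem universal_metric_on_Jn (n : ℕ) (hn : 1 ≤ n) :
    ∃ m : MetricSpace (Set.Icc ((n : ℝ) - 1) (n : ℝ)),
      m.toUniformSpace.toTopologicalSpace
        = (inferInstance : TopologicalSpace (Set.Icc ((n : ℝ) - 1) (n : ℝ))) ∧
      ∀ Z : Set (Fin n → ℝ), Z.Finite →
        (∀ z ∈ Z, ∀ i : Fin n, z i ∈ Set.Icc (0 : ℝ) n) →
        (∀ z ∈ Z, ∀ z' ∈ Z, z ≠ z' → (1 : ℝ) / n ≤ ⨆ i : Fin n, |z i - z' i|) →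
        ∃ g : Z → Set.Icc ((n : ℝ) - 1) (n : ℝ),
          ∀ z z' : Z,
            m.dist (g z) (g z') = ⨆ i : Fin n, |(z : Fin n → ℝ) i - (z' : Fin n → ℝ) i| := by
  have hn0 : (0:ℝ) < n := by exact_mod_cast hn
  have h1n : (0:ℝ) < 1 / n := by positivity
  -- the topology compatibility
  have H : ∀ s : Set (Set.Icc ((n : ℝ) - 1) (n : ℝ)), IsOpen s ↔
      ∀ x ∈ s, ∃ ε > 0, ∀ y, dd n x y < ε → y ∈ s := by
    intro s
    constructor
    · intro hs x hx
      rw [Metric.isOpen_iff] at hs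
      obtain ⟨δ, hδ, hball⟩ := hs x hx
      refine ⟨min δ (1/n), lt_min hδ h1n, fun y hy => ?_⟩
      have h2 : min |x.1 - y.1| (1/n) < min δ (1/n) := lt_of_le_of_lt (le_max_right _ _) hy
      rcases min_cases |x.1 - y.1| (1/n) with ⟨he, _⟩ | ⟨he, hle⟩
      · rw [he] at h2
        apply hball
        rw [Metric.mem_ball, Subtype.dist_eq, Real.dist_eq, abs_sub_comm]
        exact lt_of_lt_of_le h2 (min_le_left _ _)
      · rw [he] at h2
        exact absurd h2 (not_lt.2 (min_le_right _ _))
    · intro h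
      rw [isOpen_iff_mem_nhds]
      intro x hx
      obtain ⟨ε, hε, hsub⟩ := h x hx
      have hc : Continuous (fun y : Set.Icc ((n : ℝ) - 1) (n : ℝ)  => dd n x y) := by
        apply Continuous.max
        · exact continuous_const.dist ((Phi_continuous n).comp continuous_subtype_val)
        · exact ((continuous_const.sub continuous_subtype_val).abs).min continuous_const
      have h0 : dd n x x = 0 := dd_self n x
      have hmem : (fun y => dd n x y) ⁻¹' (Set.Iio ε) ∈ nhds x :=
        hc.continuousAt.preimage_mem_nhds (by rw [h0]; exact Iio_mem_nhds hε)
      exact Filter.mem_of_superset hmem (fun y hy => hsub y hy)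
  refine ⟨MetricSpace.ofDistTopology (dd n) (dd_self n) (dd_comm n) (dd_triangle n) H
    (dd_eq_zero n hn), rfl, ?_⟩
  intro Z _ hcube hdisp
  have key : ∀ z : Z, ∃ s : Set.Icc ((n : ℝ) - 1) (n : ℝ), Phi n s.1 = (z : Fin n → ℝ) := by
    intro z
    obtain ⟨s, hs, hs2⟩ := Phi_surj n hn z (hcube z z.2)
    exact ⟨⟨s, hs⟩, hs2⟩
  choose g hg using key
  refine ⟨g, fun z z' => ?_⟩
  show dd n (g z) (g z') = _
  rcases eq_or_ne z z' with rfl | hne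
  · rw [dd_self]
    have : ∀ i : Fin n, |(z : Fin n → ℝ) i - (z : Fin n → ℝ) i| = 0 := fun i => by simp
    simp only [this]
    haveI : Nonempty (Fin n) := ⟨⟨0, hn⟩⟩
    rw [ciSup_const]
  · have hcne : (z : Fin n → ℝ) ≠ (z' : Fin n → ℝ) := fun h => hne (Subtype.ext h)
    have hdist := hdisp z z.2 z' z'.2 hcne
    rw [pi_sup_dist n hn] at hdist ⊢
    rw [dd, hg z, hg z']
    exact max_eq_left (le_trans (min_le_right _ _) hdist)
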